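/- Suppose a k×k×k complex tensor P satisfies P = Diag(𝟙) · (g₁, g₂, g₃) for some g₁, g₂, g₃ ∈ GL(k,ℂ), the entries of P sum to 1, and det(P*ᵢ𝟙) ≠ 0 for i = 1,2,3. Then there exist π ∈ ℂᵏ with nonzero entries summing to 1 and invertible complex matrices M₁, M₂, M₃ each with row sums 1 such that P = Diag(π) · (M₁, M₂, M₃). -/

import Mathlib

open Matrix BigOperators

/-- The diagonal k×k×k tensor with entries `v i` at positions (i,i,i). -/
noncomputable def diagT {k : ℕ} (v : Fin k → ℂ) : Fin k → Fin k → Fin k → ℂ :=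
  fun i j ℓ => if i = j ∧ j = ℓ then v i else 0

/-- The multilinear action of three matrices on a k×k×k tensor. -/
noncomputable def tAct {k : ℕ} (P : Fin k → Fin k → Fin k → ℂ)
    (g1 g2 g3 : Matrix (Fin k) (Fin k) ℂ) : Fin k → Fin k → Fin k → ℂ :=
  fun i j ℓ => ∑ a, ∑ b, ∑ c, P a b c * g1 a i * g2 b j * g3 c ℓ

lemma tAct_diagT {k : ℕ} (v : Fin k → ℂ) (g1 g2 g3 : Matrix (Fin k) (Fin k) ℂ)
    (i j ℓ : Fin k) :
    tAct (diagT v) g1 g2 g3 i j ℓ = ∑ a, v a * g1 a i * g2 a j * g3 a ℓ := by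
  unfold tAct diagT
  refine Finset.sum_congr rfl fun a _ => ?_
  rw [Finset.sum_eq_single a]
  · rw [Finset.sum_eq_single a]
    · simp
    · intro c _ hc; simp [hc.symm]
    · simp
  · intro b _ hb
    apply Finset.sum_eq_zero; intro c _; simp [hb.symm]
  · simp

lemma triple_eq {k : ℕ} (g h : Matrix (Fin k) (Fin k) ℂ) (r : Fin k → ℂ) :
    (Matrix.of fun i j => ∑ a, g a i * h a j * r a) =
      gᵀ * Matrix.diagonal r * h := by
  ext i j
  simp [Matrix.mul_apply, Matrix.diagonal, Finset.sum_ite_eq, transpose_apply,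
    Finset.mul_sum, mul_comm, mul_assoc, mul_left_comm]

lemma prod_ne {k : ℕ} (g h : Matrix (Fin k) (Fin k) ℂ) (r : Fin k → ℂ)
    (hd : (Matrix.of fun i j => ∑ a, g a i * h a j * r a).det ≠ 0) :
    ∀ a, r a ≠ 0 := by
  rw [triple_eq, Matrix.det_mul, Matrix.det_mul, Matrix.det_diagonal] at hd
  intro a
  have : ∏ b, r b ≠ 0 := fun h0 => hd (by simp [h0])
  exact Finset.prod_ne_zero_iff.mp this a (Finset.mem_univ a)

theorem stmt_15 (k : ℕ) (P : Fin k → Fin k → Fin k → ℂ)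
    (g1 g2 g3 : Matrix (Fin k) (Fin k) ℂ)
    (h1 : IsUnit g1.det) (h2 : IsUnit g2.det) (h3 : IsUnit g3.det)
    (hP : P = tAct (diagT (fun _ => 1)) g1 g2 g3)
    (hsum : ∑ i, ∑ j, ∑ ℓ, P i j ℓ = 1)
    (hm1 : (Matrix.of fun j ℓ => ∑ i, P i j ℓ).det ≠ 0)
    (hm2 : (Matrix.of fun i ℓ => ∑ j, P i j ℓ).det ≠ 0)
    (hm3 : (Matrix.of fun i j => ∑ ℓ, P i j ℓ).det ≠ 0) :
    ∃ (π : Fin k → ℂ) (M1 M2 M3 : Matrix (Fin k) (Fin k) ℂ),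
      (∀ a, π a ≠ 0) ∧ ∑ a, π a = 1 ∧
      IsUnit M1.det ∧ IsUnit M2.det ∧ IsUnit M3.det ∧
      (∀ a, ∑ i, M1 a i = 1) ∧ (∀ a, ∑ j, M2 a j = 1) ∧ (∀ a, ∑ ℓ, M3 a ℓ = 1) ∧
      P = tAct (diagT π) M1 M2 M3 := by
  set r1 : Fin k → ℂ := fun a => ∑ i, g1 a i with hr1
  set r2 : Fin k → ℂ := fun a => ∑ i, g2 a i with hr2
  set r3 : Fin k → ℂ := fun a => ∑ i, g3 a i with hr3
  have hPe : ∀ i j ℓ, P i j ℓ = ∑ a, g1 a i * g2 a j * g3 a ℓ := by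
    intro i j ℓ; rw [hP, tAct_diagT]; simp
  have hr3ne : ∀ a, r3 a ≠ 0 := by
    apply prod_ne g1 g2 r3
    convert hm3 using 3 with i j
    funext i j
    simp only [hPe]
    rw [Finset.sum_comm]
    exact Finset.sum_congr rfl fun a _ => by simp [hr3, Finset.mul_sum]
  have hr2ne : ∀ a, r2 a ≠ 0 := by
    apply prod_ne g1 g3 r2
    convert hm2 using 3 with i j
    funext i ℓ
    simp only [hPe]
    rw [Finset.sum_comm]
    refine Finset.sum_congr rfl fun a _ => ?_
    simp [hr2, Finset.mul_sum, Finset.sum_mul, mul_comm, mul_assoc, mul_left_comm]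
  have hr1ne : ∀ a, r1 a ≠ 0 := by
    apply prod_ne g2 g3 r1
    convert hm1 using 3 with i j
    funext j ℓ
    simp only [hPe]
    rw [Finset.sum_comm]
    refine Finset.sum_congr rfl fun a _ => ?_
    simp [hr1, Finset.mul_sum, Finset.sum_mul, mul_comm, mul_assoc, mul_left_comm]
  have hMunit : ∀ (g : Matrix (Fin k) (Fin k) ℂ) (r : Fin k → ℂ), (∀ a, r a ≠ 0) →
      IsUnit g.det → IsUnit (Matrix.of fun a i => g a i / r a).det := by
    intro g r hr hg
    have he : (Matrix.of fun a i => g a i / r a) =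
        Matrix.diagonal (fun a => (r a)⁻¹) * g := by
      ext a i
      simp [Matrix.mul_apply, Matrix.diagonal_apply, ite_mul, Finset.sum_ite_eq,
        div_eq_mul_inv, mul_comm]
    rw [he, Matrix.det_mul, Matrix.det_diagonal]
    exact isUnit_iff_ne_zero.mpr (mul_ne_zero
      (Finset.prod_ne_zero_iff.mpr fun a _ => inv_ne_zero (hr a))
      (isUnit_iff_ne_zero.mp hg))
  refine ⟨fun a => r1 a * r2 a * r3 a,
    Matrix.of fun a i => g1 a i / r1 a,
    Matrix.of fun a i => g2 a i / r2 a,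
    Matrix.of fun a i => g3 a i / r3 a,
    fun a => by exact mul_ne_zero (mul_ne_zero (hr1ne a) (hr2ne a)) (hr3ne a),
    ?_, ?_, ?_, ?_, ?_, ?_, ?_, ?_⟩
  · -- sum π = 1
    rw [← hsum]
    have hexp : ∀ a, r1 a * r2 a * r3 a = ∑ i, ∑ j, ∑ ℓ, g1 a i * g2 a j * g3 a ℓ := by
      intro a
      symm
      calc ∑ i, ∑ j, ∑ ℓ, g1 a i * g2 a j * g3 a ℓ
          = ∑ i, ∑ j, g1 a i * g2 a j * r3 a := by
            refine Finset.sum_congr rfl fun i _ => Finset.sum_congr rfl fun j _ => ?_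
            rw [← Finset.mul_sum, hr3]
        _ = ∑ i, g1 a i * r2 a * r3 a := by
            refine Finset.sum_congr rfl fun i _ => ?_
            rw [← Finset.sum_mul, ← Finset.mul_sum, hr2]
        _ = r1 a * r2 a * r3 a := by
            rw [← Finset.sum_mul, ← Finset.sum_mul, hr1]
    simp only [hexp, hPe]
    rw [Finset.sum_comm]
    refine Finset.sum_congr rfl fun i _ => ?_
    rw [Finset.sum_comm]
    refine Finset.sum_congr rfl fun j _ => ?_
    rw [Finset.sum_comm]
  · exact hMunit g1 r1 hr1ne h1
  · exact hMunit g2 r2 hr2ne h2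
  · exact hMunit g3 r3 hr3ne h3
  · intro a; rw [hr1]; simp [div_eq_mul_inv, ← Finset.sum_mul,
      mul_inv_cancel₀ (hr1ne a)]; exact mul_inv_cancel₀ (hr1ne a)
  · intro a; rw [hr2]; simp [div_eq_mul_inv, ← Finset.sum_mul,
      mul_inv_cancel₀ (hr2ne a)]; exact mul_inv_cancel₀ (hr2ne a)
  · intro a; rw [hr3]; simp [div_eq_mul_inv, ← Finset.sum_mul,
      mul_inv_cancel₀ (hr3ne a)]; exact mul_inv_cancel₀ (hr3ne a)
  · funext i j ℓ
    rw [tAct_diagT, hPe]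
    refine Finset.sum_congr rfl fun a _ => ?_
    simp only [Matrix.of_apply, div_eq_mul_inv]
    have e1 := mul_inv_cancel₀ (hr1ne a)
    have e2 := mul_inv_cancel₀ (hr2ne a)
    have e3 := mul_inv_cancel₀ (hr3ne a)
    calc g1 a i * g2 a j * g3 a ℓ
        = (r1 a * (r1 a)⁻¹) * (r2 a * (r2 a)⁻¹) * (r3 a * (r3 a)⁻¹) *
          (g1 a i * g2 a j * g3 a ℓ) := by rw [e1, e2, e3]; ring
      _ = r1 a * r2 a * r3 a * (g1 a i * (r1 a)⁻¹) * (g2 a j * (r2 a)⁻¹) *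
          (g3 a ℓ * (r3 a)⁻¹) := by ring
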